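/- Let V be a module over the twisted N=1 Schrödinger-Neveu-Schwarz algebra and let v ∈ V satisfy G_{-1/2}v = Y_{-1/2}v = M_{-1/2}v = 0. Then Y_{-p} v = 0 and M_{-p} v = 0 for all p ∈ (1/2)ℤ with p > 0, and moreover ((1/2)L_{-1}G_{-1/2} + G_{-3/2})G_{-3/2} v = 0. -/

import Mathlib

noncomputable section

/-- Basis of the twisted N=1 Schrodinger-Neveu-Schwarz algebra.
`L n` is L_n, `G k` is G_{k+1/2}, `Y p` is Y_{p/2}, `M p` is M_{p/2}, `C` is the central element. -/
inductive B : Type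
  | L : ℤ → B
  | G : ℤ → B
  | Y : ℤ → B
  | M : ℤ → B
  | C : B
deriving DecidableEq

/-- The underlying vector space of tsns. -/
abbrev V := B →₀ ℂ

/-- Basis vectors. -/
def e (x : B) : V := Finsupp.single x 1

/-- Parity of a basis element. -/
def isOdd : B → Bool
  | .G _ => true
  | .Y p => if p % 2 = 0 then false else true
  | .M p => if p % 2 = 0 then false else true
  | _ => false

/-- The Koszul sign (-1)^{|x||y|}. -/
def sgn (x y : B) : ℂ := if isOdd x && isOdd y then -1 else 1

/-- The super-bracket on basis elements of tsns. -/
def bb : B → B → V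
  | .L n, .L m => ((m : ℂ) - n) • e (.L (n+m)) +
      (if m = -n then (((n:ℂ)^3 - (n:ℂ))/12) • e B.C else 0)
  | .L n, .G k => ((k : ℂ) + 1/2 - (n:ℂ)/2) • e (.G (k+n))
  | .G k, .L n => (-((k : ℂ) + 1/2 - (n:ℂ)/2)) • e (.G (k+n))
  | .G k, .G l => (2:ℂ) • e (.L (k+l+1)) +
      (if l = -k-1 then ((1 - 4*((k:ℂ)+1/2)^2)/12) • e B.C else 0)
  | .L n, .Y p => (if p % 2 = 0 then (p:ℂ)/2 - (n:ℂ)/2 else (p:ℂ)/2) • e (.Y (p + 2*n))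
  | .Y p, .L n => (-(if p % 2 = 0 then (p:ℂ)/2 - (n:ℂ)/2 else (p:ℂ)/2)) • e (.Y (p + 2*n))
  | .L n, .M p => (if p % 2 = 0 then (p:ℂ)/2 else (p:ℂ)/2 + (n:ℂ)/2) • e (.M (p + 2*n))
  | .M p, .L n => (-(if p % 2 = 0 then (p:ℂ)/2 else (p:ℂ)/2 + (n:ℂ)/2)) • e (.M (p + 2*n))
  | .G k, .Y p => (if p % 2 = 0 then ((p:ℂ)/2 - ((k:ℂ)+1/2))/2 else 2) • e (.Y (p + 2*k + 1))
  | .Y p, .G k => (if p % 2 = 0 then -(((p:ℂ)/2 - ((k:ℂ)+1/2))/2) else 2) • e (.Y (p + 2*k + 1))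
  | .G k, .M p => (if p % 2 = 0 then (p:ℂ)/4 else 2) • e (.M (p + 2*k + 1))
  | .M p, .G k => (if p % 2 = 0 then -((p:ℂ)/4) else 2) • e (.M (p + 2*k + 1))
  | .Y p, .Y q => (if p % 2 = 0 then (if q % 2 = 0 then ((q:ℂ) - p)/4 else (q:ℂ)/4)
      else (if q % 2 = 0 then -((p:ℂ)/4) else 2)) • e (.M (p + q))
  | _, _ => 0

/-- Bilinear extension of the bracket to all of tsns. -/
def br (f g : V) : V := f.sum fun x a => g.sum fun y b => (a * b) • bb x y

/-- Linear extension of an assignment of operators to basis elements. -/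
def ext {W : Type} [AddCommGroup W] [Module ℂ W] (ρ : B → Module.End ℂ W) (f : V) :
    Module.End ℂ W := f.sum fun x a => a • ρ x

/-- A module (representation) over the twisted N=1 Schrodinger-Neveu-Schwarz algebra. -/
structure TsnsRep (W : Type) [AddCommGroup W] [Module ℂ W] where
  ρ : B → Module.End ℂ W
  compat : ∀ x y : B, ext ρ (bb x y) = ρ x * ρ y - sgn x y • (ρ y * ρ x)

/-- Simplicity (irreducibility) of a tsns-module. -/
def TsnsSimple {W : Type} [AddCommGroup W] [Module ℂ W] (r : TsnsRep W) : Prop :=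
  (∃ w : W, w ≠ 0) ∧
    ∀ U : Submodule ℂ W, (∀ x : B, ∀ u ∈ U, r.ρ x u ∈ U) → U = ⊥ ∨ U = ⊤

lemma opid {W : Type} [AddCommGroup W] [Module ℂ W] (r : TsnsRep W) (x y z : B) (c : ℂ)
    (h : bb x y = Finsupp.single z c) (v : W) :
    c • r.ρ z v = r.ρ x (r.ρ y v) - sgn x y • r.ρ y (r.ρ x v) := by
  have h2 := congrArg (fun f : Module.End ℂ W => f v) (r.compat x y)
  simp only [ext, h, LinearMap.sub_apply, Module.End.mul_apply, LinearMap.smul_apply] at h2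
  rw [Finsupp.sum_single_index (by simp)] at h2
  simpa using h2

lemma bbGY (p : ℤ) :
    bb (.G (-1)) (.Y p) = Finsupp.single (B.Y (p-1)) (if p % 2 = 0 then ((p:ℂ)+1)/4 else 2) := by
  simp only [bb, e, Finsupp.smul_single, smul_eq_mul, mul_one]
  split <;> norm_num <;> ring_nf

lemma bbGM (p : ℤ) :
    bb (.G (-1)) (.M p) = Finsupp.single (B.M (p-1)) (if p % 2 = 0 then (p:ℂ)/4 else 2) := by
  simp only [bb, e, Finsupp.smul_single, smul_eq_mul, mul_one]
  split <;> norm_num <;> ring_nf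

lemma killstep {W : Type} [AddCommGroup W] [Module ℂ W] (r : TsnsRep W) (x y z : B) (c : ℂ)
    (h : bb x y = Finsupp.single z c) (hc : c ≠ 0) (v : W)
    (h1 : r.ρ y v = 0) (h2 : r.ρ x v = 0) : r.ρ z v = 0 := by
  have h3 := opid r x y z c h v
  rw [h1, h2] at h3
  simp only [map_zero, smul_zero, sub_zero, smul_eq_zero] at h3
  rcases h3 with h3 | h3
  · exact absurd h3 hc
  · exact h3

/-- if G_{-1/2}v = Y_{-1/2}v = M_{-1/2}v = 0 then Y_{-p}v = M_{-p}v = 0 for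
all p ∈ (1/2)ℤ, p > 0, and ((1/2)L_{-1}G_{-1/2} + G_{-3/2})G_{-3/2}v = 0. -/
theorem negative_YM_kill {W : Type} [AddCommGroup W] [Module ℂ W] (r : TsnsRep W)
    (v : W) (hG : r.ρ (.G (-1)) v = 0) (hY : r.ρ (.Y (-1)) v = 0)
    (hM : r.ρ (.M (-1)) v = 0) :
    (∀ p : ℤ, 0 < p → r.ρ (.Y (-p)) v = 0 ∧ r.ρ (.M (-p)) v = 0) ∧
    ((1:ℂ)/2) • r.ρ (.L (-1)) (r.ρ (.G (-1)) (r.ρ (.G (-2)) v))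
      + r.ρ (.G (-2)) (r.ρ (.G (-2)) v) = 0 := by
  constructor
  · intro p hp
    have hp1 : 1 ≤ p := hp
    refine Int.le_induction (motive := fun p _ => r.ρ (.Y (-p)) v = 0 ∧ r.ρ (.M (-p)) v = 0) ?_ ?_ p hp1
    · exact ⟨hY, hM⟩
    · intro q hq ih
      have e1 : -(q+1) = -q - 1 := by ring
      rw [e1]
      constructor
      · refine killstep r (.G (-1)) (.Y (-q)) (.Y (-q-1)) _ (bbGY (-q)) ?_ v ih.1 hG
        split
        · next hpar =>
          have hq1 : q ≠ 1 := by omega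
          simp only [ne_eq, div_eq_zero_iff]
          push_cast
          intro hc
          rcases hc with hc | hc
          · apply hq1
            have : (q:ℂ) = 1 := by linear_combination -hc
            exact_mod_cast this
          · norm_num at hc
        · norm_num
      · refine killstep r (.G (-1)) (.M (-q)) (.M (-q-1)) _ (bbGM (-q)) ?_ v ih.2 hG
        split
        · next hpar =>
          have hq0 : q ≠ 0 := by omega
          simp only [ne_eq, div_eq_zero_iff]
          push_cast
          intro hc
          rcases hc with hc | hc
          · apply hq0
            have : (q:ℂ) = 0 := by linear_combination -hc
            exact_mod_cast this
          · norm_num at hc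
        · norm_num
  · have hL1 : r.ρ (.L (-1)) v = 0 := by
      have h := opid r (.G (-1)) (.G (-1)) (.L (-1)) 2
        (by simp [bb, e, Finsupp.smul_single]) v
      rw [hG] at h
      simpa [sgn, isOdd] using h
    have hB : r.ρ (.G (-1)) (r.ρ (.G (-2)) v) = (2:ℂ) • r.ρ (.L (-2)) v := by
      have h := opid r (.G (-1)) (.G (-2)) (.L (-2)) 2
        (by simp [bb, e, Finsupp.smul_single]) v
      rw [hG] at h
      simp only [sgn, isOdd, Bool.and_self, if_true, map_zero, smul_zero, sub_zero] at h
      exact h.symm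
    have hC : r.ρ (.G (-2)) (r.ρ (.G (-2)) v) = r.ρ (.L (-3)) v := by
      have h := opid r (.G (-2)) (.G (-2)) (.L (-3)) 2
        (by simp [bb, e, Finsupp.smul_single]) v
      simp only [sgn, isOdd, Bool.and_self, if_true] at h
      have h2 : (2:ℂ) • r.ρ (.L (-3)) v = (2:ℂ) • r.ρ (.G (-2)) (r.ρ (.G (-2)) v) := by
        rw [h]; module
      exact (smul_right_injective W (two_ne_zero (α := ℂ)) h2).symm
    have hD : r.ρ (.L (-1)) (r.ρ (.L (-2)) v) = -r.ρ (.L (-3)) v := by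
      have h := opid r (.L (-1)) (.L (-2)) (.L (-3)) (-1)
        (by simp only [bb, e, Finsupp.smul_single, smul_eq_mul, mul_one]
            norm_num [← Finsupp.single_neg, ← Finsupp.single_add]) v
      rw [hL1] at h
      simp only [sgn, isOdd, Bool.and_self, Bool.and_false, if_false, map_zero, smul_zero,
        sub_zero, one_smul] at h
      rw [← h]
      module
    rw [hB, hC, map_smul, hD]
    module
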